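/- If a uniformly 3-connected graph G on n vertices is constructed from complete graphs on four vertices by a sequence of bridge operations, edge joins, spoke operations, among which exactly p are primary spoke operations, then ν(G) ≥ n − p, where ν(G) is the number of vertices of minimum degree of G. -/
import Mathlib


open SimpleGraph

/-- The degree of a vertex, as the cardinality of its neighbor set. -/
noncomputable def vdeg {V : Type*} (G : SimpleGraph V) (v : V) : ℕ :=
  (G.neighborSet v).ncard

/-- The minimum degree of a graph. -/
noncomputable def minDeg {V : Type*} (G : SimpleGraph V) : ℕ :=
  sInf (Set.range (vdeg G))

/-- `ν(G)`: the number of vertices of minimum degree. -/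
noncomputable def nu {V : Type*} (G : SimpleGraph V) : ℕ :=
  {v | vdeg G v = minDeg G}.ncard

/-- A family of `m` pairwise independent (i.e. internally vertex-disjoint, pairwise distinct)
paths from `u` to `v`. -/
def IsIndepPathFamily {V : Type*} (G : SimpleGraph V) {u v : V} {m : ℕ}
    (W : Fin m → G.Walk u v) : Prop :=
  (∀ i, (W i).IsPath) ∧ Function.Injective W ∧
    ∀ i j, i ≠ j → ∀ x, x ∈ (W i).support → x ∈ (W j).support → x = u ∨ x = v

/-- A graph on at least `k+1` vertices is uniformly `k`-connected if each pair of its vertices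
is connected by `k` and not more than `k` independent paths. -/
def UniformlyConnected (k : ℕ) {V : Type*} [Fintype V] (G : SimpleGraph V) : Prop :=
  k + 1 ≤ Fintype.card V ∧
    ∀ u v : V, u ≠ v →
      (∃ W : Fin k → G.Walk u v, IsIndepPathFamily G W) ∧
      ∀ m : ℕ, (∃ W : Fin m → G.Walk u v, IsIndepPathFamily G W) → m ≤ k

/-- `k`-connected: more than `k` vertices, and still connected after deleting any fewer
than `k` vertices. -/
def KConnected (k : ℕ) {V : Type*} [Fintype V] (G : SimpleGraph V) : Prop :=
  k < Fintype.card V ∧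
    ∀ S : Finset V, S.card < k → (G.induce {v : V | v ∉ S}).Connected
/-- A finite simple graph, bundled with its vertex type. -/
structure FinGraph where
  V : Type
  [instFintype : Fintype V]
  graph : SimpleGraph V

attribute [instance] FinGraph.instFintype
/-- Hypothesis of the bridge operation: `v` has exactly the three distinct
neighbors `x`, `y`, `z` (so `v` has degree 3 and neighborhood `{x, y, z}`). -/
def BridgeHyp {V : Type*} (G : SimpleGraph V) (v x y z : V) : Prop :=
  x ≠ y ∧ x ≠ z ∧ y ≠ z ∧ G.neighborSet v = {x, y, z}

/-- The bridge operation: `(G1 − v1) ∪ (G2 − v2) + x1x2 + y1y2 + z1z2`. -/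
def BridgeGraph {V1 V2 : Type*} (G1 : SimpleGraph V1) (G2 : SimpleGraph V2)
    (v1 x1 y1 z1 : V1) (v2 x2 y2 z2 : V2) :
    SimpleGraph ({a : V1 // a ≠ v1} ⊕ {b : V2 // b ≠ v2}) :=
  SimpleGraph.fromRel (fun p q =>
    match p, q with
    | Sum.inl a, Sum.inl a' => G1.Adj a.1 a'.1
    | Sum.inr b, Sum.inr b' => G2.Adj b.1 b'.1
    | Sum.inl a, Sum.inr b =>
        (a.1 = x1 ∧ b.1 = x2) ∨ (a.1 = y1 ∧ b.1 = y2) ∨ (a.1 = z1 ∧ b.1 = z2)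
    | Sum.inr _, Sum.inl _ => False)
/-- Hypotheses of the spoke operation: `v`, `w`, `x` are distinct, `vw` is an edge,
and every vertex other than possibly `x` has degree 3. -/
def SpokeHyp {V : Type*} (G : SimpleGraph V) (v w x : V) : Prop :=
  v ≠ w ∧ v ≠ x ∧ w ≠ x ∧ G.Adj v w ∧ ∀ z : V, z ≠ x → vdeg G z = 3

/-- The spoke operation: `G + y − vw + vy + wy + xy`, where the new vertex `y`
is `Sum.inr ()`. -/
def SpokeGraph {V : Type*} (G : SimpleGraph V) (v w x : V) : SimpleGraph (V ⊕ Unit) :=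
  SimpleGraph.fromRel (fun p q =>
    match p, q with
    | Sum.inl a, Sum.inl b => G.Adj a b ∧ ¬(a = v ∧ b = w) ∧ ¬(a = w ∧ b = v)
    | Sum.inl a, Sum.inr _ => a = v ∨ a = w ∨ a = x
    | Sum.inr _, _ => False)
/-- The edge join of the edges `ab` and `cd`:
`G + x + y − ab − cd + ax + xb + cy + yd + xy`, where the new vertices `x` and `y`
are `Sum.inr false` and `Sum.inr true`. -/
def EdgeJoinGraph {V : Type*} (G : SimpleGraph V) (a b c d : V) : SimpleGraph (V ⊕ Bool) :=
  SimpleGraph.fromRel (fun p q =>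
    match p, q with
    | Sum.inl u, Sum.inl u' => G.Adj u u' ∧ ¬(u = a ∧ u' = b) ∧ ¬(u = b ∧ u' = a) ∧
        ¬(u = c ∧ u' = d) ∧ ¬(u = d ∧ u' = c)
    | Sum.inl u, Sum.inr false => u = a ∨ u = b
    | Sum.inl u, Sum.inr true => u = c ∨ u = d
    | Sum.inr i, Sum.inr i' => i ≠ i'
    | Sum.inr _, Sum.inl _ => False)
/-- `H` is (up to isomorphism) the result of applying the bridge operation to `G1`, `G2`. -/
def IsBridgeOf (H G1 G2 : FinGraph) : Prop :=
  ∃ (v1 x1 y1 z1 : G1.V) (v2 x2 y2 z2 : G2.V),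
    BridgeHyp G1.graph v1 x1 y1 z1 ∧ BridgeHyp G2.graph v2 x2 y2 z2 ∧
    Nonempty (H.graph ≃g BridgeGraph G1.graph G2.graph v1 x1 y1 z1 v2 x2 y2 z2)
/-- `H` is the result of a primary spoke operation on `G'` (here `deg x = 3`). -/
def IsPrimarySpokeOf (H G' : FinGraph) : Prop :=
  ∃ v w x : G'.V, SpokeHyp G'.graph v w x ∧ vdeg G'.graph x = 3 ∧
    Nonempty (H.graph ≃g SpokeGraph G'.graph v w x)

/-- `H` is the result of a secondary spoke operation on `G'` (here `deg x > 3`). -/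
def IsSecondarySpokeOf (H G' : FinGraph) : Prop :=
  ∃ v w x : G'.V, SpokeHyp G'.graph v w x ∧ 3 < vdeg G'.graph x ∧
    Nonempty (H.graph ≃g SpokeGraph G'.graph v w x)
/-- `H` is the result of an edge join of two distinct edges of the 3-regular
3-connected graph `G'`. -/
def IsEdgeJoinOf (H G' : FinGraph) : Prop :=
  (∀ z : G'.V, vdeg G'.graph z = 3) ∧ KConnected 3 G'.graph ∧
  ∃ a b c d : G'.V, G'.graph.Adj a b ∧ G'.graph.Adj c d ∧ s(a, b) ≠ s(c, d) ∧
    Nonempty (H.graph ≃g EdgeJoinGraph G'.graph a b c d)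
/-- `Constructed G j t p s`: the graph `G` is constructed from complete graphs on four
vertices by a sequence of `j` bridge operations, `t` edge joins, `p` primary spoke
operations and `s` secondary spoke operations. -/
inductive Constructed : FinGraph → ℕ → ℕ → ℕ → ℕ → Prop
  | base (G : FinGraph) : Nonempty (G.graph ≃g (⊤ : SimpleGraph (Fin 4))) →
      Constructed G 0 0 0 0
  | bridge (G G1 G2 : FinGraph) (j1 t1 p1 s1 j2 t2 p2 s2 : ℕ) :
      Constructed G1 j1 t1 p1 s1 → Constructed G2 j2 t2 p2 s2 → IsBridgeOf G G1 G2 →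
      Constructed G (j1 + j2 + 1) (t1 + t2) (p1 + p2) (s1 + s2)
  | edgeJoin (G G' : FinGraph) (j t p s : ℕ) :
      Constructed G' j t p s → IsEdgeJoinOf G G' → Constructed G j (t + 1) p s
  | primarySpoke (G G' : FinGraph) (j t p s : ℕ) :
      Constructed G' j t p s → IsPrimarySpokeOf G G' → Constructed G j t (p + 1) s
  | secondarySpoke (G G' : FinGraph) (j t p s : ℕ) :
      Constructed G' j t p s → IsSecondarySpokeOf G G' → Constructed G j t p (s + 1)

lemma ncard_inl_union_inr {α β : Type*} [Finite α] [Finite β] (s : Set α) (t : Set β) :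
    ((Sum.inl '' s ∪ Sum.inr '' t : Set (α ⊕ β))).ncard = s.ncard + t.ncard := by
  rw [Set.ncard_union_eq ?_ (Set.toFinite _) (Set.toFinite _),
    Set.ncard_image_of_injective _ Sum.inl_injective,
    Set.ncard_image_of_injective _ Sum.inr_injective]
  rw [Set.disjoint_left]
  rintro _ ⟨a, -, rfl⟩ ⟨b, -, hb⟩
  exact Sum.inl_ne_inr hb.symm

section Spoke
variable {V : Type*} [Fintype V] {G : SimpleGraph V} {v w x : V}

lemma spoke_ns_inl (a : V) :
    (SpokeGraph G v w x).neighborSet (Sum.inl a) =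
      Sum.inl '' (G.neighborSet a \ {z | (a = v ∧ z = w) ∨ (a = w ∧ z = v)}) ∪
      Sum.inr '' {u : Unit | a = v ∨ a = w ∨ a = x} := by
  ext p
  cases p with
  | inl b =>
    simp only [SpokeGraph, mem_neighborSet, fromRel_adj, Set.mem_union, Set.mem_image,
      Set.mem_diff, Set.mem_setOf_eq, mem_neighborSet]
    constructor
    · rintro ⟨hne, h | h⟩
      · exact Or.inl ⟨b, ⟨h.1, fun hc => hc.elim (fun ⟨h1,h2⟩ => h.2.1 ⟨h1,h2⟩) (fun ⟨h1,h2⟩ => h.2.2 ⟨h1,h2⟩)⟩, rfl⟩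
      · refine Or.inl ⟨b, ⟨h.1.symm, fun hc => hc.elim (fun ⟨h1,h2⟩ => h.2.2 ⟨h2,h1⟩) (fun ⟨h1,h2⟩ => h.2.1 ⟨h2,h1⟩)⟩, rfl⟩
    · rintro (⟨b', ⟨hadj, hn⟩, hb⟩ | ⟨u, hu, hb⟩)
      · cases Sum.inl_injective hb
        exact ⟨by simpa using hadj.ne, Or.inl ⟨hadj, fun hc => hn (Or.inl hc), fun hc => hn (Or.inr hc)⟩⟩
      · exact absurd hb (by simp)
  | inr u =>
    simp only [SpokeGraph, mem_neighborSet, fromRel_adj, Set.mem_union, Set.mem_image,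
      Set.mem_diff, Set.mem_setOf_eq]
    constructor
    · rintro ⟨hne, h | h⟩
      · exact Or.inr ⟨u, h, by simp⟩
      · exact absurd h (by simp)
    · rintro (⟨b', _, hb⟩ | ⟨u', hu', hb⟩)
      · exact absurd hb (by simp)
      · cases u; cases u'
        exact ⟨by simp, Or.inl hu'⟩

lemma spoke_ns_inr :
    (SpokeGraph G v w x).neighborSet (Sum.inr ()) = {Sum.inl v, Sum.inl w, Sum.inl x} := by
  ext p
  cases p with
  | inl a =>
    simp only [SpokeGraph, mem_neighborSet, fromRel_adj, Set.mem_insert_iff, Set.mem_singleton_iff]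
    constructor
    · rintro ⟨hne, hh | hh⟩
      · exact absurd hh (by simp)
      · rcases hh with rfl|rfl|rfl <;> simp
    · rintro (hh|hh|hh) <;> cases hh <;> exact ⟨by simp, Or.inr (by simp)⟩
  | inr u' =>
    cases u'
    simp [SpokeGraph, fromRel_adj]

lemma spoke_vdeg_inr (h : SpokeHyp G v w x) :
    vdeg (SpokeGraph G v w x) (Sum.inr ()) = 3 := by
  obtain ⟨hvw, hvx, hwx, -, -⟩ := h
  rw [vdeg, spoke_ns_inr]
  rw [Set.ncard_insert_of_notMem (by simp [hvw, hvx]) (Set.toFinite _),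
    Set.ncard_pair (by simp [hwx])]

lemma spoke_vdeg_other (h : SpokeHyp G v w x) (a : V) (hav : a ≠ v) (haw : a ≠ w) (hax : a ≠ x) :
    vdeg (SpokeGraph G v w x) (Sum.inl a) = vdeg G a := by
  rw [vdeg, spoke_ns_inl, ncard_inl_union_inr]
  have h1 : {z | (a = v ∧ z = w) ∨ (a = w ∧ z = v)} = (∅ : Set V) := by
    ext z; simp [hav, haw]
  have h2 : {u : Unit | a = v ∨ a = w ∨ a = x} = (∅ : Set Unit) := by
    ext u; simp [hav, haw, hax]
  rw [h1, h2]
  simp [vdeg]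

lemma spoke_vdeg_v (h : SpokeHyp G v w x) :
    vdeg (SpokeGraph G v w x) (Sum.inl v) = vdeg G v := by
  obtain ⟨hvw, hvx, hwx, hadj, -⟩ := h
  rw [vdeg, spoke_ns_inl, ncard_inl_union_inr]
  have h1 : {z | (v = v ∧ z = w) ∨ (v = w ∧ z = v)} = ({w} : Set V) := by
    ext z; simp [hvw]
  have h2 : {u : Unit | v = v ∨ v = w ∨ v = x} = (Set.univ : Set Unit) := by
    ext u; simp
  rw [h1, h2]
  have h3 : (G.neighborSet v \ {w}).ncard + 1 = (G.neighborSet v).ncard :=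
    Set.ncard_diff_singleton_add_one (by simpa using hadj) (Set.toFinite _)
  have : (Set.univ : Set Unit).ncard = 1 := by
    rw [Set.ncard_univ]; simp
  rw [this, vdeg]
  omega

lemma spoke_vdeg_w (h : SpokeHyp G v w x) :
    vdeg (SpokeGraph G v w x) (Sum.inl w) = vdeg G w := by
  obtain ⟨hvw, hvx, hwx, hadj, -⟩ := h
  rw [vdeg, spoke_ns_inl, ncard_inl_union_inr]
  have h1 : {z | (w = v ∧ z = w) ∨ (w = w ∧ z = v)} = ({v} : Set V) := by
    ext z; simp [hvw.symm]
  have h2 : {u : Unit | w = v ∨ w = w ∨ w = x} = (Set.univ : Set Unit) := by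
    ext u; simp
  rw [h1, h2]
  have h3 : (G.neighborSet w \ {v}).ncard + 1 = (G.neighborSet w).ncard :=
    Set.ncard_diff_singleton_add_one (by simpa using hadj.symm) (Set.toFinite _)
  have : (Set.univ : Set Unit).ncard = 1 := by
    rw [Set.ncard_univ]; simp
  rw [this, vdeg]
  omega

lemma spoke_vdeg_x (h : SpokeHyp G v w x) :
    vdeg (SpokeGraph G v w x) (Sum.inl x) = vdeg G x + 1 := by
  obtain ⟨hvw, hvx, hwx, hadj, -⟩ := h
  rw [vdeg, spoke_ns_inl, ncard_inl_union_inr]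
  have h1 : {z | (x = v ∧ z = w) ∨ (x = w ∧ z = v)} = (∅ : Set V) := by
    ext z; simp [hvx.symm, hwx.symm]
  have h2 : {u : Unit | x = v ∨ x = w ∨ x = x} = (Set.univ : Set Unit) := by
    ext u; simp
  rw [h1, h2]
  have : (Set.univ : Set Unit).ncard = 1 := by
    rw [Set.ncard_univ]; simp
  rw [this, vdeg]
  simp

end Spoke

lemma ncard_subtype_mem {α : Type*} [Finite α] {v : α} (s : Set α) :
    {a : {x // x ≠ v} | a.1 ∈ s}.ncard = (s \ {v}).ncard := by
  rw [← Set.ncard_image_of_injective _ Subtype.val_injective]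
  congr 1
  ext c
  constructor
  · rintro ⟨⟨w, hwv⟩, hws, rfl⟩; exact ⟨hws, hwv⟩
  · rintro ⟨hcs, hcv⟩; exact ⟨⟨c, hcv⟩, hcs, rfl⟩

section Bridge
variable {V1 V2 : Type*} [Fintype V1] [Fintype V2] {G1 : SimpleGraph V1} {G2 : SimpleGraph V2}
  {v1 x1 y1 z1 : V1} {v2 x2 y2 z2 : V2}

lemma bridge_ns_inl (a : {a : V1 // a ≠ v1}) :
    (BridgeGraph G1 G2 v1 x1 y1 z1 v2 x2 y2 z2).neighborSet (Sum.inl a) =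
      Sum.inl '' {a' : {a : V1 // a ≠ v1} | a'.1 ∈ G1.neighborSet a.1} ∪
      Sum.inr '' {b : {b : V2 // b ≠ v2} |
        (a.1 = x1 ∧ b.1 = x2) ∨ (a.1 = y1 ∧ b.1 = y2) ∨ (a.1 = z1 ∧ b.1 = z2)} := by
  ext p
  cases p with
  | inl a' =>
    simp only [BridgeGraph, mem_neighborSet, fromRel_adj, Set.mem_union, Set.mem_image,
      Set.mem_setOf_eq]
    constructor
    · rintro ⟨hne, hh | hh⟩
      · exact Or.inl ⟨a', hh, rfl⟩
      · exact Or.inl ⟨a', hh.symm, rfl⟩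
    · rintro (⟨b', hb', hb⟩ | ⟨b', hb', hb⟩)
      · cases Sum.inl_injective hb
        exact ⟨fun hc => (G1.irrefl (by rw [Sum.inl.injEq] at hc; rw [hc] at hb'; exact hb')),
          Or.inl hb'⟩
      · exact absurd hb (by simp)
  | inr b =>
    simp only [BridgeGraph, mem_neighborSet, fromRel_adj, Set.mem_union, Set.mem_image,
      Set.mem_setOf_eq]
    constructor
    · rintro ⟨hne, hh | hh⟩
      · exact Or.inr ⟨b, hh, rfl⟩
      · exact absurd hh (by simp)
    · rintro (⟨b', hb', hb⟩ | ⟨b', hb', hb⟩)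
      · exact absurd hb (by simp)
      · cases Sum.inr_injective hb
        exact ⟨by simp, Or.inl hb'⟩

lemma bridge_ns_inr (b : {b : V2 // b ≠ v2}) :
    (BridgeGraph G1 G2 v1 x1 y1 z1 v2 x2 y2 z2).neighborSet (Sum.inr b) =
      Sum.inr '' {b' : {b : V2 // b ≠ v2} | b'.1 ∈ G2.neighborSet b.1} ∪
      Sum.inl '' {a : {a : V1 // a ≠ v1} |
        (a.1 = x1 ∧ b.1 = x2) ∨ (a.1 = y1 ∧ b.1 = y2) ∨ (a.1 = z1 ∧ b.1 = z2)} := by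
  ext p
  cases p with
  | inr b' =>
    simp only [BridgeGraph, mem_neighborSet, fromRel_adj, Set.mem_union, Set.mem_image,
      Set.mem_setOf_eq]
    constructor
    · rintro ⟨hne, hh | hh⟩
      · exact Or.inl ⟨b', hh, rfl⟩
      · exact Or.inl ⟨b', hh.symm, rfl⟩
    · rintro (⟨b'', hb', hb⟩ | ⟨a', hb', hb⟩)
      · cases Sum.inr_injective hb
        exact ⟨fun hc => (G2.irrefl (by rw [Sum.inr.injEq] at hc; rw [hc] at hb'; exact hb')),
          Or.inl hb'⟩
      · exact absurd hb (by simp)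
  | inl a' =>
    simp only [BridgeGraph, mem_neighborSet, fromRel_adj, Set.mem_union, Set.mem_image,
      Set.mem_setOf_eq]
    constructor
    · rintro ⟨hne, hh | hh⟩
      · exact absurd hh (by simp)
      · exact Or.inr ⟨a', hh, rfl⟩
    · rintro (⟨b'', hb', hb⟩ | ⟨a'', hb', hb⟩)
      · exact absurd hb (by simp)
      · cases Sum.inl_injective hb
        exact ⟨by simp, Or.inr hb'⟩

lemma bridge_vdeg_inl (h1 : BridgeHyp G1 v1 x1 y1 z1) (h2 : BridgeHyp G2 v2 x2 y2 z2)
    (a : {a : V1 // a ≠ v1}) :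
    vdeg (BridgeGraph G1 G2 v1 x1 y1 z1 v2 x2 y2 z2) (Sum.inl a) = vdeg G1 a.1 := by
  obtain ⟨hxy, hxz, hyz, hns⟩ := h1
  obtain ⟨hxy2, hxz2, hyz2, hns2⟩ := h2
  have hx2 : x2 ≠ v2 := by
    have : x2 ∈ G2.neighborSet v2 := by rw [hns2]; simp
    exact fun hc => G2.irrefl (by rw [hc] at this; exact this)
  have hy2 : y2 ≠ v2 := by
    have : y2 ∈ G2.neighborSet v2 := by rw [hns2]; simp
    exact fun hc => G2.irrefl (by rw [hc] at this; exact this)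
  have hz2 : z2 ≠ v2 := by
    have : z2 ∈ G2.neighborSet v2 := by rw [hns2]; simp
    exact fun hc => G2.irrefl (by rw [hc] at this; exact this)
  rw [vdeg, bridge_ns_inl, ncard_inl_union_inr, ncard_subtype_mem]
  have hmem : v1 ∈ G1.neighborSet a.1 ↔ (a.1 = x1 ∨ a.1 = y1 ∨ a.1 = z1) := by
    constructor
    · intro h
      have : a.1 ∈ G1.neighborSet v1 := (G1.adj_symm h)
      rw [hns] at this; simpa using this
    · intro h
      have : a.1 ∈ G1.neighborSet v1 := by rw [hns]; simpa using h
      exact G1.adj_symm this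
  by_cases hadj : v1 ∈ G1.neighborSet a.1
  · have hone : {b : {b : V2 // b ≠ v2} |
        (a.1 = x1 ∧ b.1 = x2) ∨ (a.1 = y1 ∧ b.1 = y2) ∨ (a.1 = z1 ∧ b.1 = z2)}.ncard = 1 := by
      rcases hmem.mp hadj with ha | ha | ha
      · have : {b : {b : V2 // b ≠ v2} |
            (a.1 = x1 ∧ b.1 = x2) ∨ (a.1 = y1 ∧ b.1 = y2) ∨ (a.1 = z1 ∧ b.1 = z2)}
            = {⟨x2, hx2⟩} := by
          ext b
          simp only [Set.mem_setOf_eq, Set.mem_singleton_iff, ha]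
          constructor
          · rintro (⟨-, hb⟩ | ⟨hc, -⟩ | ⟨hc, -⟩)
            · exact Subtype.ext hb
            · exact absurd hc hxy
            · exact absurd hc hxz
          · rintro rfl; simp
        rw [this, Set.ncard_singleton]
      · have : {b : {b : V2 // b ≠ v2} |
            (a.1 = x1 ∧ b.1 = x2) ∨ (a.1 = y1 ∧ b.1 = y2) ∨ (a.1 = z1 ∧ b.1 = z2)}
            = {⟨y2, hy2⟩} := by
          ext b
          simp only [Set.mem_setOf_eq, Set.mem_singleton_iff, ha]
          constructor
          · rintro (⟨hc, -⟩ | ⟨-, hb⟩ | ⟨hc, -⟩)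
            · exact absurd hc.symm hxy
            · exact Subtype.ext hb
            · exact absurd hc hyz
          · rintro rfl; simp
        rw [this, Set.ncard_singleton]
      · have : {b : {b : V2 // b ≠ v2} |
            (a.1 = x1 ∧ b.1 = x2) ∨ (a.1 = y1 ∧ b.1 = y2) ∨ (a.1 = z1 ∧ b.1 = z2)}
            = {⟨z2, hz2⟩} := by
          ext b
          simp only [Set.mem_setOf_eq, Set.mem_singleton_iff, ha]
          constructor
          · rintro (⟨hc, -⟩ | ⟨hc, -⟩ | ⟨-, hb⟩)
            · exact absurd hc.symm hxz
            · exact absurd hc.symm hyz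
            · exact Subtype.ext hb
          · rintro rfl; simp
        rw [this, Set.ncard_singleton]
    rw [hone]
    have := Set.ncard_diff_singleton_add_one hadj (Set.toFinite (G1.neighborSet a.1))
    rw [vdeg]
    omega
  · have hzero : {b : {b : V2 // b ≠ v2} |
        (a.1 = x1 ∧ b.1 = x2) ∨ (a.1 = y1 ∧ b.1 = y2) ∨ (a.1 = z1 ∧ b.1 = z2)}.ncard = 0 := by
      rw [Set.ncard_eq_zero (Set.toFinite _)]
      ext b
      simp only [Set.mem_setOf_eq, Set.mem_empty_iff_false, iff_false]
      rintro (⟨ha, -⟩ | ⟨ha, -⟩ | ⟨ha, -⟩) <;> exact hadj (hmem.mpr (by tauto))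
    rw [hzero, Set.diff_singleton_eq_self hadj, vdeg]
    omega
lemma bridge_vdeg_inr (h1 : BridgeHyp G1 v1 x1 y1 z1) (h2 : BridgeHyp G2 v2 x2 y2 z2)
    (b : {b : V2 // b ≠ v2}) :
    vdeg (BridgeGraph G1 G2 v1 x1 y1 z1 v2 x2 y2 z2) (Sum.inr b) = vdeg G2 b.1 := by
  obtain ⟨hxy, hxz, hyz, hns⟩ := h1
  obtain ⟨hxy2, hxz2, hyz2, hns2⟩ := h2
  have hx1 : x1 ≠ v1 := by
    have : x1 ∈ G1.neighborSet v1 := by rw [hns]; simp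
    exact fun hc => G1.irrefl (by rw [hc] at this; exact this)
  have hy1 : y1 ≠ v1 := by
    have : y1 ∈ G1.neighborSet v1 := by rw [hns]; simp
    exact fun hc => G1.irrefl (by rw [hc] at this; exact this)
  have hz1 : z1 ≠ v1 := by
    have : z1 ∈ G1.neighborSet v1 := by rw [hns]; simp
    exact fun hc => G1.irrefl (by rw [hc] at this; exact this)
  rw [vdeg, bridge_ns_inr]
  rw [Set.ncard_union_eq ?_ (Set.toFinite _) (Set.toFinite _),
    Set.ncard_image_of_injective _ Sum.inr_injective,
    Set.ncard_image_of_injective _ Sum.inl_injective]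
  swap
  · rw [Set.disjoint_left]
    rintro _ ⟨a, -, rfl⟩ ⟨c, -, hb⟩
    exact Sum.inr_ne_inl hb.symm
  rw [ncard_subtype_mem]
  have hmem : v2 ∈ G2.neighborSet b.1 ↔ (b.1 = x2 ∨ b.1 = y2 ∨ b.1 = z2) := by
    constructor
    · intro h
      have : b.1 ∈ G2.neighborSet v2 := (G2.adj_symm h)
      rw [hns2] at this; simpa using this
    · intro h
      have : b.1 ∈ G2.neighborSet v2 := by rw [hns2]; simpa using h
      exact G2.adj_symm this
  by_cases hadj : v2 ∈ G2.neighborSet b.1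
  · have hone : {a : {a : V1 // a ≠ v1} |
        (a.1 = x1 ∧ b.1 = x2) ∨ (a.1 = y1 ∧ b.1 = y2) ∨ (a.1 = z1 ∧ b.1 = z2)}.ncard = 1 := by
      rcases hmem.mp hadj with ha | ha | ha
      · have : {a : {a : V1 // a ≠ v1} |
            (a.1 = x1 ∧ b.1 = x2) ∨ (a.1 = y1 ∧ b.1 = y2) ∨ (a.1 = z1 ∧ b.1 = z2)}
            = {⟨x1, hx1⟩} := by
          ext a
          simp only [Set.mem_setOf_eq, Set.mem_singleton_iff, ha]
          constructor
          · rintro (⟨hb, -⟩ | ⟨-, hc⟩ | ⟨-, hc⟩)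
            · exact Subtype.ext hb
            · first | exact absurd hc hxy2 | exact absurd hc.symm hxy2 | exact absurd hc hxz2 | exact absurd hc.symm hxz2 | exact absurd hc hyz2 | exact absurd hc.symm hyz2
            · first | exact absurd hc hxy2 | exact absurd hc.symm hxy2 | exact absurd hc hxz2 | exact absurd hc.symm hxz2 | exact absurd hc hyz2 | exact absurd hc.symm hyz2
          · rintro rfl; simp
        rw [this, Set.ncard_singleton]
      · have : {a : {a : V1 // a ≠ v1} |
            (a.1 = x1 ∧ b.1 = x2) ∨ (a.1 = y1 ∧ b.1 = y2) ∨ (a.1 = z1 ∧ b.1 = z2)}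
            = {⟨y1, hy1⟩} := by
          ext a
          simp only [Set.mem_setOf_eq, Set.mem_singleton_iff, ha]
          constructor
          · rintro (⟨-, hc⟩ | ⟨hb, -⟩ | ⟨-, hc⟩)
            · first | exact absurd hc hxy2 | exact absurd hc.symm hxy2 | exact absurd hc hxz2 | exact absurd hc.symm hxz2 | exact absurd hc hyz2 | exact absurd hc.symm hyz2
            · exact Subtype.ext hb
            · first | exact absurd hc hxy2 | exact absurd hc.symm hxy2 | exact absurd hc hxz2 | exact absurd hc.symm hxz2 | exact absurd hc hyz2 | exact absurd hc.symm hyz2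
          · rintro rfl; simp
        rw [this, Set.ncard_singleton]
      · have : {a : {a : V1 // a ≠ v1} |
            (a.1 = x1 ∧ b.1 = x2) ∨ (a.1 = y1 ∧ b.1 = y2) ∨ (a.1 = z1 ∧ b.1 = z2)}
            = {⟨z1, hz1⟩} := by
          ext a
          simp only [Set.mem_setOf_eq, Set.mem_singleton_iff, ha]
          constructor
          · rintro (⟨-, hc⟩ | ⟨-, hc⟩ | ⟨hb, -⟩)
            · first | exact absurd hc hxy2 | exact absurd hc.symm hxy2 | exact absurd hc hxz2 | exact absurd hc.symm hxz2 | exact absurd hc hyz2 | exact absurd hc.symm hyz2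
            · first | exact absurd hc hxy2 | exact absurd hc.symm hxy2 | exact absurd hc hxz2 | exact absurd hc.symm hxz2 | exact absurd hc hyz2 | exact absurd hc.symm hyz2
            · exact Subtype.ext hb
          · rintro rfl; simp
        rw [this, Set.ncard_singleton]
    rw [hone]
    have := Set.ncard_diff_singleton_add_one hadj (Set.toFinite (G2.neighborSet b.1))
    rw [vdeg]
    omega
  · have hzero : {a : {a : V1 // a ≠ v1} |
        (a.1 = x1 ∧ b.1 = x2) ∨ (a.1 = y1 ∧ b.1 = y2) ∨ (a.1 = z1 ∧ b.1 = z2)}.ncard = 0 := by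
      rw [Set.ncard_eq_zero (Set.toFinite _)]
      ext a
      simp only [Set.mem_setOf_eq, Set.mem_empty_iff_false, iff_false]
      rintro (⟨-, ha⟩ | ⟨-, ha⟩ | ⟨-, ha⟩) <;> exact hadj (hmem.mpr (by tauto))
    rw [hzero, Set.diff_singleton_eq_self hadj, vdeg]
    omega

end Bridge

section EdgeJoin
variable {V : Type*} [Fintype V] {G : SimpleGraph V} {a b c d : V}

lemma ej_ns_inr_false :
    (EdgeJoinGraph G a b c d).neighborSet (Sum.inr false) =
      {Sum.inl a, Sum.inl b, Sum.inr true} := by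
  ext p
  cases p with
  | inl u =>
    simp only [EdgeJoinGraph, mem_neighborSet, fromRel_adj, Set.mem_insert_iff,
      Set.mem_singleton_iff]
    constructor
    · rintro ⟨hne, hh | hh⟩
      · exact absurd hh (by simp)
      · rcases hh with rfl | rfl <;> simp
    · rintro (hh | hh | hh) <;> cases hh <;> exact ⟨by simp, Or.inr (by simp)⟩
  | inr i =>
    cases i <;>
      simp only [EdgeJoinGraph, mem_neighborSet, fromRel_adj, Set.mem_insert_iff,
        Set.mem_singleton_iff] <;>
      constructor
    · rintro ⟨hne, -⟩; exact absurd rfl hne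
    · rintro (hh | hh | hh) <;> simp_all
    · rintro -; simp
    · rintro -; exact ⟨by simp, Or.inl (by simp)⟩

lemma ej_ns_inr_true :
    (EdgeJoinGraph G a b c d).neighborSet (Sum.inr true) =
      {Sum.inl c, Sum.inl d, Sum.inr false} := by
  ext p
  cases p with
  | inl u =>
    simp only [EdgeJoinGraph, mem_neighborSet, fromRel_adj, Set.mem_insert_iff,
      Set.mem_singleton_iff]
    constructor
    · rintro ⟨hne, hh | hh⟩
      · exact absurd hh (by simp)
      · rcases hh with rfl | rfl <;> simp
    · rintro (hh | hh | hh) <;> cases hh <;> exact ⟨by simp, Or.inr (by simp)⟩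
  | inr i =>
    cases i <;>
      simp only [EdgeJoinGraph, mem_neighborSet, fromRel_adj, Set.mem_insert_iff,
        Set.mem_singleton_iff] <;>
      constructor
    · rintro -; simp
    · rintro -; exact ⟨by simp, Or.inl (by simp)⟩
    · rintro ⟨hne, -⟩; exact absurd rfl hne
    · rintro (hh | hh | hh) <;> simp_all

lemma ej_ns_inl (u : V) :
    (EdgeJoinGraph G a b c d).neighborSet (Sum.inl u) =
      Sum.inl '' (G.neighborSet u \
        {z | (u = a ∧ z = b) ∨ (u = b ∧ z = a) ∨ (u = c ∧ z = d) ∨ (u = d ∧ z = c)}) ∪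
      Sum.inr '' {i : Bool | (i = false ∧ (u = a ∨ u = b)) ∨ (i = true ∧ (u = c ∨ u = d))} := by
  ext p
  cases p with
  | inl z =>
    simp only [EdgeJoinGraph, mem_neighborSet, fromRel_adj, Set.mem_union, Set.mem_image,
      Set.mem_diff, Set.mem_setOf_eq, mem_neighborSet]
    constructor
    · rintro ⟨hne, ⟨hadj, h1, h2, h3, h4⟩ | ⟨hadj, h1, h2, h3, h4⟩⟩
      · exact Or.inl ⟨z, ⟨hadj, by tauto⟩, rfl⟩
      · exact Or.inl ⟨z, ⟨hadj.symm, by tauto⟩, rfl⟩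
    · rintro (⟨z', ⟨hadj, hn⟩, hz⟩ | ⟨i, hi, hz⟩)
      · cases Sum.inl_injective hz
        exact ⟨by simpa using hadj.ne, Or.inl ⟨hadj, by tauto⟩⟩
      · exact absurd hz (by simp)
  | inr i =>
    cases i <;>
      simp only [EdgeJoinGraph, mem_neighborSet, fromRel_adj, Set.mem_union, Set.mem_image,
        Set.mem_diff, Set.mem_setOf_eq] <;>
      constructor
    · rintro ⟨hne, hh | hh⟩
      · exact Or.inr ⟨false, by tauto, rfl⟩
      · exact absurd hh (by simp)
    · rintro (⟨z', hz', hz⟩ | ⟨i, hi, hz⟩)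
      · exact absurd hz (by simp)
      · cases hz
        rcases hi with ⟨-, hi⟩ | ⟨hi, -⟩
        · exact ⟨by simp, Or.inl hi⟩
        · exact absurd hi (by simp)
    · rintro ⟨hne, hh | hh⟩
      · exact Or.inr ⟨true, by tauto, rfl⟩
      · exact absurd hh (by simp)
    · rintro (⟨z', hz', hz⟩ | ⟨i, hi, hz⟩)
      · exact absurd hz (by simp)
      · cases hz
        rcases hi with ⟨hi, -⟩ | ⟨-, hi⟩
        · exact absurd hi (by simp)
        · exact ⟨by simp, Or.inl hi⟩

lemma ej_vdeg (hreg : ∀ z : V, vdeg G z = 3) (hab : G.Adj a b) (hcd : G.Adj c d)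
    (hne : s(a, b) ≠ s(c, d)) (p : V ⊕ Bool) :
    vdeg (EdgeJoinGraph G a b c d) p = 3 := by
  have hab' : a ≠ b := hab.ne
  have hcd' : c ≠ d := hcd.ne
  have hne1 : ¬(a = c ∧ b = d) := fun ⟨h1, h2⟩ => hne (by rw [h1, h2])
  have hne2 : ¬(a = d ∧ b = c) := fun ⟨h1, h2⟩ => hne (by rw [h1, h2, Sym2.eq_swap])
  cases p with
  | inr i =>
    cases i
    · rw [vdeg, ej_ns_inr_false,
        Set.ncard_insert_of_notMem (by simp [hab']) (Set.toFinite _),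
        Set.ncard_pair (by simp)]
    · rw [vdeg, ej_ns_inr_true,
        Set.ncard_insert_of_notMem (by simp [hcd']) (Set.toFinite _),
        Set.ncard_pair (by simp)]
  | inl u =>
    rw [vdeg, ej_ns_inl, ncard_inl_union_inr]
    have hDsub : {z | (u = a ∧ z = b) ∨ (u = b ∧ z = a) ∨ (u = c ∧ z = d) ∨ (u = d ∧ z = c)}
        ⊆ G.neighborSet u := by
      rintro z (⟨rfl, rfl⟩ | ⟨rfl, rfl⟩ | ⟨rfl, rfl⟩ | ⟨rfl, rfl⟩)
      · exact hab
      · exact hab.symm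
      · exact hcd
      · exact hcd.symm
    rw [Set.ncard_diff hDsub (Set.toFinite _), show (G.neighborSet u).ncard = 3 from hreg u]
    have key : ∃ k, k ≤ 2 ∧
        ({z | (u = a ∧ z = b) ∨ (u = b ∧ z = a) ∨ (u = c ∧ z = d) ∨ (u = d ∧ z = c)} :
          Set V).ncard = k ∧
        ({i : Bool | (i = false ∧ (u = a ∨ u = b)) ∨ (i = true ∧ (u = c ∨ u = d))} :
          Set Bool).ncard = k := by
      by_cases hua : u = a
      · subst hua
        by_cases huc : u = c
        · subst huc
          have hbd : b ≠ d := fun h => hne1 ⟨rfl, h⟩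
          refine ⟨2, le_refl 2, ?_, ?_⟩
          · rw [show {z | (u = u ∧ z = b) ∨ (u = b ∧ z = u) ∨ (u = u ∧ z = d) ∨ (u = d ∧ z = u)}
                = ({b, d} : Set V) by ext z; simp [hab', hcd']]
            exact Set.ncard_pair hbd
          · rw [show {i : Bool | (i = false ∧ (u = u ∨ u = b)) ∨ (i = true ∧ (u = u ∨ u = d))}
                = (Set.univ : Set Bool) by ext i; cases i <;> simp]
            rw [Set.ncard_univ]; simp
        · by_cases hud : u = d
          · subst hud
            have hbc : b ≠ c := fun h => hne2 ⟨rfl, h⟩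
            refine ⟨2, le_refl 2, ?_, ?_⟩
            · rw [show {z | (u = u ∧ z = b) ∨ (u = b ∧ z = u) ∨ (u = c ∧ z = u) ∨ (u = u ∧ z = c)}
                  = ({b, c} : Set V) by ext z; simp [hab', huc]]
              exact Set.ncard_pair hbc
            · rw [show {i : Bool | (i = false ∧ (u = u ∨ u = b)) ∨ (i = true ∧ (u = c ∨ u = u))}
                  = (Set.univ : Set Bool) by ext i; cases i <;> simp]
              rw [Set.ncard_univ]; simp
          · refine ⟨1, by norm_num, ?_, ?_⟩
            · rw [show {z | (u = u ∧ z = b) ∨ (u = b ∧ z = u) ∨ (u = c ∧ z = d) ∨ (u = d ∧ z = c)}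
                  = ({b} : Set V) by ext z; simp [hab', huc, hud]]
              exact Set.ncard_singleton b
            · rw [show {i : Bool | (i = false ∧ (u = u ∨ u = b)) ∨ (i = true ∧ (u = c ∨ u = d))}
                  = ({false} : Set Bool) by ext i; cases i <;> simp [huc, hud]]
              exact Set.ncard_singleton false
      · by_cases hub : u = b
        · subst hub
          by_cases huc : u = c
          · subst huc
            have had : a ≠ d := fun h => hne2 ⟨h, rfl⟩
            refine ⟨2, le_refl 2, ?_, ?_⟩
            · rw [show {z | (u = a ∧ z = u) ∨ (u = u ∧ z = a) ∨ (u = u ∧ z = d) ∨ (u = d ∧ z = u)}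
                  = ({a, d} : Set V) by ext z; simp [Ne.symm hab', hcd']]
              exact Set.ncard_pair had
            · rw [show {i : Bool | (i = false ∧ (u = a ∨ u = u)) ∨ (i = true ∧ (u = u ∨ u = d))}
                  = (Set.univ : Set Bool) by ext i; cases i <;> simp]
              rw [Set.ncard_univ]; simp
          · by_cases hud : u = d
            · subst hud
              have hac : a ≠ c := fun h => hne1 ⟨h, rfl⟩
              refine ⟨2, le_refl 2, ?_, ?_⟩
              · rw [show {z | (u = a ∧ z = u) ∨ (u = u ∧ z = a) ∨ (u = c ∧ z = u) ∨ (u = u ∧ z = c)}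
                    = ({a, c} : Set V) by ext z; simp [Ne.symm hab', Ne.symm hcd']]
                exact Set.ncard_pair hac
              · rw [show {i : Bool | (i = false ∧ (u = a ∨ u = u)) ∨ (i = true ∧ (u = c ∨ u = u))}
                    = (Set.univ : Set Bool) by ext i; cases i <;> simp]
                rw [Set.ncard_univ]; simp
            · refine ⟨1, by norm_num, ?_, ?_⟩
              · rw [show {z | (u = a ∧ z = u) ∨ (u = u ∧ z = a) ∨ (u = c ∧ z = d) ∨ (u = d ∧ z = c)}
                    = ({a} : Set V) by ext z; simp [Ne.symm hab', huc, hud]]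
                exact Set.ncard_singleton a
              · rw [show {i : Bool | (i = false ∧ (u = a ∨ u = u)) ∨ (i = true ∧ (u = c ∨ u = d))}
                    = ({false} : Set Bool) by ext i; cases i <;> simp [huc, hud]]
                exact Set.ncard_singleton false
        · by_cases huc : u = c
          · subst huc
            refine ⟨1, by norm_num, ?_, ?_⟩
            · rw [show {z | (u = a ∧ z = b) ∨ (u = b ∧ z = a) ∨ (u = u ∧ z = d) ∨ (u = d ∧ z = u)}
                  = ({d} : Set V) by ext z; simp [hua, hub, hcd']]
              exact Set.ncard_singleton d
            · rw [show {i : Bool | (i = false ∧ (u = a ∨ u = b)) ∨ (i = true ∧ (u = u ∨ u = d))}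
                  = ({true} : Set Bool) by ext i; cases i <;> simp [hua, hub]]
              exact Set.ncard_singleton true
          · by_cases hud : u = d
            · subst hud
              refine ⟨1, by norm_num, ?_, ?_⟩
              · rw [show {z | (u = a ∧ z = b) ∨ (u = b ∧ z = a) ∨ (u = c ∧ z = u) ∨ (u = u ∧ z = c)}
                    = ({c} : Set V) by ext z; simp [hua, hub, Ne.symm hcd']]
                exact Set.ncard_singleton c
              · rw [show {i : Bool | (i = false ∧ (u = a ∨ u = b)) ∨ (i = true ∧ (u = c ∨ u = u))}
                    = ({true} : Set Bool) by ext i; cases i <;> simp [hua, hub]]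
                exact Set.ncard_singleton true
            · refine ⟨0, by norm_num, ?_, ?_⟩
              · rw [show {z | (u = a ∧ z = b) ∨ (u = b ∧ z = a) ∨ (u = c ∧ z = d) ∨ (u = d ∧ z = c)}
                    = (∅ : Set V) by ext z; simp [hua, hub, huc, hud]]
                exact Set.ncard_empty V
              · rw [show {i : Bool | (i = false ∧ (u = a ∨ u = b)) ∨ (i = true ∧ (u = c ∨ u = d))}
                    = (∅ : Set Bool) by ext i; cases i <;> simp [hua, hub, huc, hud]]
                exact Set.ncard_empty Bool
    obtain ⟨k, hk2, hDk, hRk⟩ := key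
    rw [hDk, hRk]
    omega
end EdgeJoin

lemma vdeg_iso {V W : Type*} {G : SimpleGraph V} {G' : SimpleGraph W} (e : G ≃g G') (v : V) :
    vdeg G' (e v) = vdeg G v := by
  unfold vdeg
  rw [← Nat.card_coe_set_eq, ← Nat.card_coe_set_eq]
  exact Nat.card_congr (e.mapNeighborSet v).symm

lemma transfer_iso {V W : Type*} [Finite V] [Finite W] {G : SimpleGraph V} {K : SimpleGraph W}
    (e : G ≃g K) :
    (∀ v, vdeg G v = vdeg K (e v)) ∧ Nat.card V = Nat.card W ∧
      {v | vdeg G v ≠ 3}.ncard = {w | vdeg K w ≠ 3}.ncard := by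
  refine ⟨fun v => (vdeg_iso e v).symm, Nat.card_congr e.toEquiv, ?_⟩
  rw [← Nat.card_coe_set_eq, ← Nat.card_coe_set_eq]
  exact Nat.card_congr (Equiv.subtypeEquiv e.toEquiv (fun v => by
    simp only [Set.mem_setOf_eq]
    rw [show vdeg K (e.toEquiv v) = vdeg G v from vdeg_iso e v]))

lemma ncard_ne_singleton {α : Type*} [Finite α] (v : α) :
    Nat.card {a : α // a ≠ v} = Nat.card α - 1 := by
  have h1 : Nat.card {a : α // a ≠ v} = ({a | a ≠ v} : Set α).ncard :=
    Nat.card_coe_set_eq _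
  rw [h1, show ({a | a ≠ v} : Set α) = Set.univ \ {v} by ext w; simp,
    Set.ncard_diff (Set.subset_univ _) (Set.toFinite _), Set.ncard_univ, Set.ncard_singleton]

/-- The key invariant: min degree 3 with at most `p` exceptional vertices. -/
def GoodInv (G : FinGraph) (p : ℕ) : Prop :=
  (∀ v, 3 ≤ vdeg G.graph v) ∧ {v | vdeg G.graph v ≠ 3}.ncard ≤ p ∧
    p + 4 ≤ Fintype.card G.V

lemma constructed_goodInv {G : FinGraph} {j t p s : ℕ} (hc : Constructed G j t p s) :
    GoodInv G p := by
  induction hc with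
  | base G hiso =>
    obtain ⟨e⟩ := hiso
    obtain ⟨hdeg, hcard, hset⟩ := transfer_iso e
    have htop : ∀ v : Fin 4, vdeg (⊤ : SimpleGraph (Fin 4)) v = 3 := by
      intro v
      rw [vdeg, show (⊤ : SimpleGraph (Fin 4)).neighborSet v = Set.univ \ {v} by
        ext w; simp [eq_comm],
        Set.ncard_diff (Set.subset_univ _) (Set.toFinite _), Set.ncard_univ, Set.ncard_singleton]
      simp
    refine ⟨fun v => by rw [hdeg v, htop], ?_, ?_⟩
    · rw [hset, show {w : Fin 4 | vdeg (⊤ : SimpleGraph (Fin 4)) w ≠ 3} = ∅ by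
        ext w; simp [htop w]]
      simp
    · rw [← Nat.card_eq_fintype_card, hcard]
      simp
  | bridge G G1 G2 j1 t1 p1 s1 j2 t2 p2 s2 hc1 hc2 hb ih1 ih2 =>
    obtain ⟨hdeg1, hbd1, hcard1⟩ := ih1
    obtain ⟨hdeg2, hbd2, hcard2⟩ := ih2
    obtain ⟨v1, x1, y1, z1, v2, x2, y2, z2, h1, h2, ⟨e⟩⟩ := hb
    obtain ⟨hdeg, hcard, hset⟩ := transfer_iso e
    have hq : ∀ q, vdeg (BridgeGraph G1.graph G2.graph v1 x1 y1 z1 v2 x2 y2 z2) q =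
        Sum.elim (fun a => vdeg G1.graph a.1) (fun b => vdeg G2.graph b.1) q := by
      rintro (a | b)
      · exact bridge_vdeg_inl h1 h2 a
      · exact bridge_vdeg_inr h1 h2 b
    refine ⟨?_, ?_, ?_⟩
    · intro v
      rw [hdeg v, hq]
      rcases e v with a | b
      · exact hdeg1 a.1
      · exact hdeg2 b.1
    · rw [hset]
      have hsplit : {q | vdeg (BridgeGraph G1.graph G2.graph v1 x1 y1 z1 v2 x2 y2 z2) q ≠ 3} =
          Sum.inl '' {a | a.1 ∈ {c | vdeg G1.graph c ≠ 3}} ∪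
          Sum.inr '' {b | b.1 ∈ {c | vdeg G2.graph c ≠ 3}} := by
        ext q
        rcases q with a | b <;> simp [hq]
      rw [hsplit, ncard_inl_union_inr, ncard_subtype_mem, ncard_subtype_mem]
      have l1 := Set.ncard_le_ncard (Set.diff_subset (s := {c | vdeg G1.graph c ≠ 3})
        (t := {v1})) (Set.toFinite _)
      have l2 := Set.ncard_le_ncard (Set.diff_subset (s := {c | vdeg G2.graph c ≠ 3})
        (t := {v2})) (Set.toFinite _)
      omega
    · rw [← Nat.card_eq_fintype_card, hcard, Nat.card_sum, ncard_ne_singleton,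
        ncard_ne_singleton, Nat.card_eq_fintype_card, Nat.card_eq_fintype_card]
      omega
  | edgeJoin G G' j t p s hc' he ih =>
    obtain ⟨hdeg', hbd', hcard'⟩ := ih
    obtain ⟨hreg, -, a, b, c, d, hab, hcd, hnedge, ⟨e⟩⟩ := he
    obtain ⟨hdeg, hcard, hset⟩ := transfer_iso e
    refine ⟨?_, ?_, ?_⟩
    · intro v
      rw [hdeg v, ej_vdeg hreg hab hcd hnedge]
    · rw [hset, show {w | vdeg (EdgeJoinGraph G'.graph a b c d) w ≠ 3} = ∅ by
        ext w; simp [ej_vdeg hreg hab hcd hnedge]]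
      simp
    · rw [← Nat.card_eq_fintype_card, hcard, Nat.card_sum, Nat.card_eq_fintype_card,
        Nat.card_eq_fintype_card]
      simp only [Fintype.card_bool]
      omega
  | primarySpoke G G' j t p s hc' hps ih =>
    obtain ⟨hdeg', hbd', hcard'⟩ := ih
    obtain ⟨v, w, x, hsp, hx3, ⟨e⟩⟩ := hps
    obtain ⟨hdeg, hcard, hset⟩ := transfer_iso e
    obtain ⟨hvw, hvx, hwx, hadj, hothers⟩ := hsp
    have hq : ∀ q, vdeg (SpokeGraph G'.graph v w x) q ≠ 3 ↔ q = Sum.inl x := by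
      rintro (a | u)
      · by_cases hax : a = x
        · subst hax
          rw [spoke_vdeg_x ⟨hvw, hvx, hwx, hadj, hothers⟩]
          have := hdeg' a
          simp only [Sum.inl.injEq, eq_self_iff_true, iff_true]
          omega
        · by_cases hav : a = v
          · subst hav
            rw [spoke_vdeg_v ⟨hvw, hvx, hwx, hadj, hothers⟩, hothers a hax]
            simp [hax]
          · by_cases haw : a = w
            · subst haw
              rw [spoke_vdeg_w ⟨hvw, hvx, hwx, hadj, hothers⟩, hothers a hax]
              simp [hax]
            · rw [spoke_vdeg_other ⟨hvw, hvx, hwx, hadj, hothers⟩ a hav haw hax,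
                hothers a hax]
              simp [hax]
      · cases u
        rw [spoke_vdeg_inr ⟨hvw, hvx, hwx, hadj, hothers⟩]
        simp
    refine ⟨?_, ?_, ?_⟩
    · intro q
      rw [hdeg q]
      by_cases h3 : vdeg (SpokeGraph G'.graph v w x) (e q) = 3
      · omega
      · rw [(hq _).mp h3, spoke_vdeg_x ⟨hvw, hvx, hwx, hadj, hothers⟩]
        have := hdeg' x
        omega
    · rw [hset, show {q | vdeg (SpokeGraph G'.graph v w x) q ≠ 3} = {Sum.inl x} by
        ext q; exact hq q]
      rw [Set.ncard_singleton]
      omega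
    · have hsum : Nat.card (G'.V ⊕ Unit) = Fintype.card G'.V + 1 := by
        rw [Nat.card_sum]
        simp [Nat.card_eq_fintype_card]
      rw [← Nat.card_eq_fintype_card, hcard, hsum]
      omega
  | secondarySpoke G G' j t p s hc' hps ih =>
    obtain ⟨hdeg', hbd', hcard'⟩ := ih
    obtain ⟨v, w, x, hsp, hx3, ⟨e⟩⟩ := hps
    obtain ⟨hdeg, hcard, hset⟩ := transfer_iso e
    obtain ⟨hvw, hvx, hwx, hadj, hothers⟩ := hsp
    have hq : ∀ q, vdeg (SpokeGraph G'.graph v w x) q ≠ 3 ↔ q = Sum.inl x := by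
      rintro (a | u)
      · by_cases hax : a = x
        · subst hax
          rw [spoke_vdeg_x ⟨hvw, hvx, hwx, hadj, hothers⟩]
          have := hdeg' a
          simp only [Sum.inl.injEq, eq_self_iff_true, iff_true]
          omega
        · by_cases hav : a = v
          · subst hav
            rw [spoke_vdeg_v ⟨hvw, hvx, hwx, hadj, hothers⟩, hothers a hax]
            simp [hax]
          · by_cases haw : a = w
            · subst haw
              rw [spoke_vdeg_w ⟨hvw, hvx, hwx, hadj, hothers⟩, hothers a hax]
              simp [hax]
            · rw [spoke_vdeg_other ⟨hvw, hvx, hwx, hadj, hothers⟩ a hav haw hax,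
                hothers a hax]
              simp [hax]
      · cases u
        rw [spoke_vdeg_inr ⟨hvw, hvx, hwx, hadj, hothers⟩]
        simp
    have hxmem : 1 ≤ {c | vdeg G'.graph c ≠ 3}.ncard := by
      have : x ∈ {c | vdeg G'.graph c ≠ 3} := by
        simp only [Set.mem_setOf_eq]
        omega
      exact (Set.ncard_pos (Set.toFinite _)).mpr ⟨x, by simpa using hx3.ne'⟩
    refine ⟨?_, ?_, ?_⟩
    · intro q
      rw [hdeg q]
      by_cases h3 : vdeg (SpokeGraph G'.graph v w x) (e q) = 3
      · omega
      · rw [(hq _).mp h3, spoke_vdeg_x ⟨hvw, hvx, hwx, hadj, hothers⟩]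
        have := hdeg' x
        omega
    · rw [hset, show {q | vdeg (SpokeGraph G'.graph v w x) q ≠ 3} = {Sum.inl x} by
        ext q; exact hq q]
      rw [Set.ncard_singleton]
      omega
    · have hsum : Nat.card (G'.V ⊕ Unit) = Fintype.card G'.V + 1 := by
        rw [Nat.card_sum]
        simp [Nat.card_eq_fintype_card]
      rw [← Nat.card_eq_fintype_card, hcard, hsum]
      omega

/-- If a uniformly 3-connected graph `G` on `n` vertices is constructed from complete graphs
on four vertices by a sequence of bridge operations, edge joins and spoke operations, among
which exactly `p` are primary spoke operations, then `ν(G) ≥ n − p`. -/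
theorem nu_ge_card_sub_primary (G : FinGraph) (j t p s : ℕ)
    (hG : UniformlyConnected 3 G.graph) (hc : Constructed G j t p s) :
    Fintype.card G.V - p ≤ nu G.graph := by
  obtain ⟨hdeg, hbd, hcard⟩ := constructed_goodInv hc
  have hne : {v | vdeg G.graph v ≠ 3}.ncard < Fintype.card G.V := by omega
  have hmin : minDeg G.graph = 3 := by
    have hnonempty : (Set.range (vdeg G.graph)).Nonempty := by
      have : Nonempty G.V := by
        rw [← Fintype.card_pos_iff]
        omega
      obtain ⟨v⟩ := this
      exact ⟨vdeg G.graph v, ⟨v, rfl⟩⟩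
    have h1 : sInf (Set.range (vdeg G.graph)) ∈ Set.range (vdeg G.graph) :=
      Nat.sInf_mem hnonempty
    obtain ⟨v0, hv0⟩ := h1
    have h2 : 3 ≤ minDeg G.graph := by
      rw [minDeg, ← hv0]
      exact hdeg v0
    -- there is a vertex of degree 3
    have h3 : ∃ v, vdeg G.graph v = 3 := by
      by_contra hcon
      push_neg at hcon
      have : {v | vdeg G.graph v ≠ 3} = Set.univ := by
        ext v; simpa using hcon v
      rw [this, Set.ncard_univ, Nat.card_eq_fintype_card] at hne
      omega
    obtain ⟨v, hv⟩ := h3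
    have h4 : minDeg G.graph ≤ 3 := by
      rw [minDeg]
      exact hv ▸ Nat.sInf_le ⟨v, rfl⟩
    omega
  rw [nu, hmin]
  have hsplit : {v | vdeg G.graph v = 3} = Set.univ \ {v | vdeg G.graph v ≠ 3} := by
    ext v; simp
  rw [hsplit, Set.ncard_diff (Set.subset_univ _) (Set.toFinite _), Set.ncard_univ,
    Nat.card_eq_fintype_card]
  omega
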